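/- For m a positive integer, ∑_{n ∈ ℤ} (1/T) e^{-π v (nβ + k)² / T²} → 1/(β√v) as T → ∞, for any fixed real k, real β > 0, and v > 0. -/

import Mathlib

open Real Filter Complex

lemma summable_gauss_aux (c : ℝ) (hc : 0 < c) :
    Summable fun n : ℤ => Real.exp (-c * (n : ℝ) ^ 2) := by
  apply Summable.of_nat_of_neg <;>
  · apply Summable.of_nonneg_of_le (fun n => (Real.exp_pos _).le)
      (fun n => ?_) (summable_geometric_of_lt_one (Real.exp_pos (-c)).le
      (Real.exp_lt_one_iff.mpr (by linarith)))
    rw [← Real.exp_nat_mul]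
    apply Real.exp_le_exp.mpr
    have hn : (n : ℝ) ≤ (n : ℝ) ^ 2 := by
      rcases Nat.eq_zero_or_pos n with h | h
      · simp [h]
      · have : (1:ℝ) ≤ (n:ℝ) := by exact_mod_cast h
        nlinarith
    push_cast
    nlinarith

lemma key_identity (v β k T : ℝ) (hv : 0 < v) (hβ : 0 < β) (hT : 0 < T) :
    ((∑' n : ℤ, (1 / T) * Real.exp (-π * v * (n * β + k) ^ 2 / T ^ 2) : ℝ) : ℂ) =
      ((1 / (β * Real.sqrt v) : ℝ) : ℂ) *
        ∑' n : ℤ, Complex.exp (-(π * T ^ 2 / (v * β ^ 2)) * (n : ℂ) ^ 2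
          + 2 * π * Complex.I * (n : ℂ) * ((k : ℂ) / β)) := by
  have hT' : (T : ℂ) ≠ 0 := by exact_mod_cast hT.ne'
  have hβ' : (β : ℂ) ≠ 0 := by exact_mod_cast hβ.ne'
  have hv' : (v : ℂ) ≠ 0 := by exact_mod_cast hv.ne'
  set a : ℝ := v * β ^ 2 / T ^ 2 with ha_def
  have ha : 0 < a := by positivity
  have haC : (0 : ℝ) < ((a : ℂ)).re := by simpa using ha
  have key := Complex.tsum_exp_neg_quadratic haC ((-(v * β * k / T ^ 2) : ℝ) : ℂ)
  set b : ℂ := ((-(v * β * k / T ^ 2) : ℝ) : ℂ) with hb_def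
  have hbC : b = -(v * β * k) / T ^ 2 := by push_cast [hb_def]; ring
  have haC2 : (a : ℂ) = v * β ^ 2 / T ^ 2 := by push_cast [ha_def]; ring
  have h1 : ∀ n : ℤ, Complex.exp (-(π : ℂ) * a * n ^ 2 + 2 * π * b * n) =
      Complex.exp ((-π * v * (n * β + k) ^ 2 / T ^ 2 : ℝ) : ℂ) *
        Complex.exp ((π * v * k ^ 2 / T ^ 2 : ℝ) : ℂ) := by
    intro n
    rw [← Complex.exp_add]
    congr 1
    rw [haC2, hbC]
    push_cast
    field_simp
    ring
  have h2 : ∀ n : ℤ, Complex.exp (-(π : ℂ) / a * (n + I * b) ^ 2) =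
      Complex.exp (-(π * T ^ 2 / (v * β ^ 2)) * (n : ℂ) ^ 2
        + 2 * π * Complex.I * (n : ℂ) * ((k : ℂ) / β)) *
        Complex.exp ((π * v * k ^ 2 / T ^ 2 : ℝ) : ℂ) := by
    intro n
    rw [← Complex.exp_add]
    congr 1
    have hsq : ((n : ℂ) + I * b) ^ 2 = (n : ℂ) ^ 2 + 2 * n * b * I - b ^ 2 := by
      have : I ^ 2 = -1 := I_sq
      ring_nf
      rw [I_sq]
      ring
    rw [hsq, hbC, haC2]
    have h2d : ((v:ℂ) * β ^ 2) ≠ 0 := by simp [hv', hβ']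
    rw [div_div_eq_mul_div, div_mul_eq_mul_div, div_eq_iff h2d]
    field_simp
    ring_nf
    try field_simp
    try ring
    push_cast
    field_simp
  simp only [h1, h2] at key
  rw [tsum_mul_right, tsum_mul_right, ← mul_assoc] at key
  have key2 := mul_right_cancel₀ (Complex.exp_ne_zero _) key
  rw [Complex.ofReal_tsum]
  have hrw : ∀ n : ℤ, (((1 / T) * Real.exp (-π * v * (n * β + k) ^ 2 / T ^ 2) : ℝ) : ℂ)
      = (1 / (T : ℂ)) * Complex.exp ((-π * v * ((n : ℝ) * β + k) ^ 2 / T ^ 2 : ℝ) : ℂ) := by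
    intro n
    rw [Complex.ofReal_mul, Complex.ofReal_exp, Complex.ofReal_div, Complex.ofReal_one]
  rw [tsum_congr hrw, tsum_mul_left, key2]
  have hsq : Real.sqrt a = Real.sqrt v * β / T := by
    rw [show a = (Real.sqrt v * β / T) ^ 2 by
      rw [div_pow, mul_pow, Real.sq_sqrt hv.le, ha_def]]
    exact Real.sqrt_sq (by positivity)
  have hcpow : (a : ℂ) ^ (1 / 2 : ℂ) = ((Real.sqrt a : ℝ) : ℂ) := by
    rw [Real.sqrt_eq_rpow, Complex.ofReal_cpow ha.le]
    norm_num
  rw [hcpow, hsq, ← mul_assoc]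
  congr 1
  have h1' : Real.sqrt v ≠ 0 := by positivity
  have hs' : (Real.sqrt v : ℂ) ≠ 0 := by exact_mod_cast h1'
  push_cast
  field_simp

theorem gaussian_sum_limit (m : ℕ) (hm : 0 < m) (v β k : ℝ) (hv : 0 < v) (hβ : 0 < β) :
    Tendsto (fun T : ℝ => ∑' n : ℤ, (1 / T) * Real.exp (-π * v * (n * β + k) ^ 2 / T ^ 2))
      atTop (nhds (1 / (β * Real.sqrt v))) := by
  have hc : 0 < π / (v * β ^ 2) := by positivity
  have hGlim : Tendsto (fun T : ℝ => ∑' n : ℤ,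
      Complex.exp (-(π * T ^ 2 / (v * β ^ 2)) * (n : ℂ) ^ 2
        + 2 * π * Complex.I * (n : ℂ) * ((k : ℂ) / β))) atTop (nhds 1) := by
    have hone : (∑' n : ℤ, (if n = 0 then (1 : ℂ) else 0)) = 1 := by
      rw [tsum_eq_single 0] <;> simp
    have hnorm : ∀ (T : ℝ) (n : ℤ), ‖Complex.exp (-(π * T ^ 2 / (v * β ^ 2)) * (n : ℂ) ^ 2
        + 2 * π * Complex.I * (n : ℂ) * ((k : ℂ) / β))‖ =
        Real.exp (-(π / (v * β ^ 2) * (n : ℝ) ^ 2) * T ^ 2) := by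
      intro T n
      rw [show (-(↑π * (T:ℂ) ^ 2 / (↑v * ↑β ^ 2)) * (n : ℂ) ^ 2
          + 2 * ↑π * Complex.I * (n : ℂ) * ((k : ℂ) / ↑β)) =
          ((-(π / (v * β ^ 2) * (n : ℝ) ^ 2) * T ^ 2 : ℝ) : ℂ)
          + ((2 * π * (n : ℝ) * (k / β) : ℝ) : ℂ) * Complex.I by push_cast; ring]
      rw [Complex.norm_exp, Complex.add_re, Complex.ofReal_re,
        Complex.mul_re, Complex.I_re, Complex.ofReal_im, Complex.I_im]
      norm_num
    rw [← hone]
    apply tendsto_tsum_of_dominated_convergence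
      (bound := fun n : ℤ => Real.exp (-(π / (v * β ^ 2)) * (n : ℝ) ^ 2))
    · exact summable_gauss_aux _ hc
    · intro n
      rcases eq_or_ne n 0 with rfl | hn
      · have : ∀ T : ℝ, Complex.exp (-(π * T ^ 2 / (v * β ^ 2)) * ((0 : ℤ) : ℂ) ^ 2
            + 2 * π * Complex.I * ((0 : ℤ) : ℂ) * ((k : ℂ) / β)) = 1 := by
          intro T; norm_num
        simp only [this, if_pos rfl]
        exact tendsto_const_nhds
      · simp only [if_neg hn]
        rw [tendsto_zero_iff_norm_tendsto_zero]
        simp only [hnorm]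
        apply Real.tendsto_exp_atBot.comp
        have hn' : 0 < π / (v * β ^ 2) * (n : ℝ) ^ 2 := by
          have : (n : ℝ) ≠ 0 := Int.cast_ne_zero.mpr hn
          positivity
        exact Tendsto.const_mul_atTop_of_neg (neg_lt_zero.mpr hn')
          (tendsto_pow_atTop two_ne_zero)
    · filter_upwards [eventually_ge_atTop (1 : ℝ)] with T hT n
      rw [hnorm]
      apply Real.exp_le_exp.mpr
      have h1 : (1 : ℝ) ≤ T ^ 2 := by nlinarith
      have h2 : 0 ≤ π / (v * β ^ 2) * (n : ℝ) ^ 2 := by positivity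
      nlinarith
  have heq : ∀ᶠ T : ℝ in atTop,
      ((∑' n : ℤ, (1 / T) * Real.exp (-π * v * (n * β + k) ^ 2 / T ^ 2) : ℝ) : ℂ) =
      ((1 / (β * Real.sqrt v) : ℝ) : ℂ) *
        ∑' n : ℤ, Complex.exp (-(π * T ^ 2 / (v * β ^ 2)) * (n : ℂ) ^ 2
          + 2 * π * Complex.I * (n : ℂ) * ((k : ℂ) / β)) := by
    filter_upwards [eventually_gt_atTop (0 : ℝ)] with T hT
    exact key_identity v β k T hv hβ hT
  have hC : Tendsto (fun T : ℝ =>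
      ((∑' n : ℤ, (1 / T) * Real.exp (-π * v * (n * β + k) ^ 2 / T ^ 2) : ℝ) : ℂ)) atTop
      (nhds ((1 / (β * Real.sqrt v) : ℝ) : ℂ)) := by
    have h := hGlim.const_mul (((1 / (β * Real.sqrt v) : ℝ)) : ℂ)
    rw [mul_one] at h
    exact Tendsto.congr' (heq.mono fun T hh => hh.symm) h
  have := (Complex.continuous_re.tendsto _).comp hC
  simpa [Function.comp_def] using this
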